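/- Let θ > 0, r, ρ ∈ ℝ, v = 2π/θ, k ∈ ℕ, T with kθ ≤ T < (k+1)θ, and f₀ : ℝ → ℝ bounded measurable. Suppose α* : ℝ → ℝ with 0 ≤ α* ≤ 1 a.e. maximizes the revenue functional G over all admissible controls. Then for every bounded measurable w with 0 ≤ α* + εw ≤ 1 a.e. for all sufficiently small ε > 0, one has 0 ≥ Σ_{l=0}^{k−1} ∫_0^{θ} w(t+θl) [ e^{−ρ(t+θl)}(1−2α*(t+θl)) − e^{rθ} p_{l+1}(t) ] f_l^{α*}(t) dt + ∫_0^{T−kθ} e^{−ρ(t+θk)} w(t+θk)(1−2α*(t+θk)) f_k^{α*}(t) dt, where p_l is the adjoint state defined by p_k(t) = e^{−ρ(t+θk)} α*(t+θk)(1−α*(t+θk)) on [0, T−θk) and 0 on [T−θk, θ), and p_l(t) = e^{rθ}(1−α*(t+θl)) p_{l+1}(t) + e^{−ρ(t+θl)} α*(t+θl)(1−α*(t+θl)). -/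

import Mathlib

open MeasureTheory

/-- The round-`l` density just before harvesting in the spatial harvesting model:
`fDen r θ f₀ α 0 t = e^{rt} f₀(vt)` with speed `v = 2π/θ`, and
`fDen r θ f₀ α (l+1) t = e^{rθ}(1 − α(t+θl)) · fDen r θ f₀ α l t`. -/
noncomputable def fDen (r θ : ℝ) (f₀ α : ℝ → ℝ) : ℕ → ℝ → ℝ
  | 0, t => Real.exp (r * t) * f₀ (2 * Real.pi / θ * t)
  | l + 1, t =>
      Real.exp (r * θ) * (1 - α (t + θ * (l : ℝ))) * fDen r θ f₀ α l t

/-- The sensitivity (Gateaux derivative of the state in direction `w`):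
`z_0 = 0`, `z_{l+1}(t) = e^{rθ}[−w(t+θl) f_l^{α}(t) + (1−α(t+θl)) z_l(t)]`. -/
noncomputable def zSens (r θ : ℝ) (f₀ α w : ℝ → ℝ) : ℕ → ℝ → ℝ
  | 0, _ => 0
  | l + 1, t =>
      Real.exp (r * θ) *
        (-(w (t + θ * (l : ℝ))) * fDen r θ f₀ α l t +
          (1 - α (t + θ * (l : ℝ))) * zSens r θ f₀ α w l t)

/-- The discounted revenue functional
`G(α) = Σ_{l=0}^{k−1} ∫_0^θ e^{−ρ(t+θl)} α(t+θl)(1−α(t+θl)) f_l^{α}(t) dt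
      + ∫_0^{T−kθ} e^{−ρ(t+θk)} α(t+θk)(1−α(t+θk)) f_k^{α}(t) dt`. -/
noncomputable def revenue (r ρ θ T : ℝ) (k : ℕ) (f₀ α : ℝ → ℝ) : ℝ :=
  (∑ l ∈ Finset.range k, ∫ t in (0 : ℝ)..θ,
      Real.exp (-ρ * (t + θ * (l : ℝ))) * α (t + θ * (l : ℝ)) *
        (1 - α (t + θ * (l : ℝ))) * fDen r θ f₀ α l t) +
    ∫ t in (0 : ℝ)..(T - (k : ℝ) * θ),
      Real.exp (-ρ * (t + θ * (k : ℝ))) * α (t + θ * (k : ℝ)) *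
        (1 - α (t + θ * (k : ℝ))) * fDen r θ f₀ α k t

/-- A harvesting-share control is admissible if it is measurable with
`0 ≤ α ≤ 1` almost everywhere. -/
def Admissible (α : ℝ → ℝ) : Prop :=
  Measurable α ∧ ∀ᵐ t : ℝ, 0 ≤ α t ∧ α t ≤ 1

namespace AVI

/-- remainder of the first-order expansion of the state -/
noncomputable def remT (r θ : ℝ) (f₀ α w : ℝ → ℝ) (ε : ℝ) (l : ℕ) (t : ℝ) : ℝ :=
  fDen r θ f₀ (fun s => α s + ε * w s) l t - fDen r θ f₀ α l t
    - ε * zSens r θ f₀ α w l t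

def BddAE (μ : Measure ℝ) (f : ℝ → ℝ) : Prop :=
  AEStronglyMeasurable f μ ∧ ∃ B, ∀ᵐ t ∂μ, |f t| ≤ B

namespace BddAE

variable {μ : Measure ℝ} {f g : ℝ → ℝ}

theorem const (μ : Measure ℝ) (c : ℝ) : BddAE μ (fun _ => c) :=
  ⟨aestronglyMeasurable_const, |c|, Filter.Eventually.of_forall fun _ => le_rfl⟩

theorem add (hf : BddAE μ f) (hg : BddAE μ g) : BddAE μ (fun t => f t + g t) := by
  obtain ⟨hfm, Bf, hBf⟩ := hf
  obtain ⟨hgm, Bg, hBg⟩ := hg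
  exact ⟨hfm.add hgm, Bf + Bg, by
    filter_upwards [hBf, hBg] with t h1 h2
    exact (abs_add_le _ _).trans (add_le_add h1 h2)⟩

theorem mul (hf : BddAE μ f) (hg : BddAE μ g) : BddAE μ (fun t => f t * g t) := by
  obtain ⟨hfm, Bf, hBf⟩ := hf
  obtain ⟨hgm, Bg, hBg⟩ := hg
  refine ⟨hfm.mul hgm, max Bf 0 * max Bg 0, ?_⟩
  filter_upwards [hBf, hBg] with t h1 h2
  rw [abs_mul]
  exact mul_le_mul (h1.trans (le_max_left _ _)) (h2.trans (le_max_left _ _))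
    (abs_nonneg _) (le_max_right _ _)

theorem neg (hf : BddAE μ f) : BddAE μ (fun t => -f t) := by
  obtain ⟨hfm, Bf, hBf⟩ := hf
  exact ⟨hfm.neg, Bf, by filter_upwards [hBf] with t h1; simpa using h1⟩

theorem sub (hf : BddAE μ f) (hg : BddAE μ g) : BddAE μ (fun t => f t - g t) := by
  simpa [sub_eq_add_neg] using hf.add hg.neg

theorem smul (c : ℝ) (hf : BddAE μ f) : BddAE μ (fun t => c * f t) :=
  (const μ c).mul hf

theorem congr (h : f =ᵐ[μ] g) (hg : BddAE μ g) : BddAE μ f := by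
  obtain ⟨hgm, Bg, hBg⟩ := hg
  exact ⟨hgm.congr h.symm, Bg, by
    filter_upwards [h, hBg] with t ht h2; rw [ht]; exact h2⟩

theorem integrable [IsFiniteMeasure μ] (hf : BddAE μ f) : Integrable f μ := by
  obtain ⟨hfm, B, hB⟩ := hf
  exact (integrable_const B).mono' hfm (by simpa using hB)

theorem mono_set {s u : Set ℝ} (h : s ⊆ u) (hf : BddAE (volume.restrict u) f) :
    BddAE (volume.restrict s) f := by
  obtain ⟨hfm, B, hB⟩ := hf
  exact ⟨hfm.mono_measure (Measure.restrict_mono h le_rfl),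
    B, Filter.Eventually.filter_mono (ae_mono (Measure.restrict_mono h le_rfl)) hB⟩

end BddAE

instance finIoc (a b : ℝ) : IsFiniteMeasure (volume.restrict (Set.Ioc a b)) :=
  ⟨by simp [Real.volume_Ioc]⟩

/-- translate a.e. statements -/
theorem ae_shift {P : ℝ → Prop} (h : ∀ᵐ t : ℝ, P t) (c : ℝ) : ∀ᵐ t : ℝ, P (t + c) := by
  rw [Filter.eventually_iff, mem_ae_iff] at h ⊢
  have hq : Measure.QuasiMeasurePreserving (fun t : ℝ => t + c) volume volume :=
    (measurePreserving_add_right volume c).quasiMeasurePreserving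
  have := hq.preimage_null h
  convert this using 2
  rfl

theorem ae_ne (c : ℝ) : ∀ᵐ t : ℝ, t ≠ c := by
  rw [ae_iff]
  have : {t : ℝ | ¬ t ≠ c} = {c} := by ext; simp
  rw [this]
  exact measure_singleton c


section Bounds

variable {θ r ρ : ℝ} {f₀ α w : ℝ → ℝ}

theorem fDen_meas (hf₀ : Measurable f₀) (hα : Measurable α) (l : ℕ) :
    Measurable (fDen r θ f₀ α l) := by
  induction l with
  | zero =>
      exact (Real.measurable_exp.comp (measurable_id.const_mul r)).mul
        (hf₀.comp (measurable_id.const_mul (2 * Real.pi / θ)))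
  | succ l ih =>
      exact ((measurable_const.mul
        (measurable_const.sub (hα.comp (measurable_id.add_const (θ * l))))).mul ih :
        Measurable fun t => Real.exp (r * θ) * (1 - α (t + θ * (l : ℝ))) * fDen r θ f₀ α l t)

theorem zSens_meas (hf₀ : Measurable f₀) (hα : Measurable α) (hw : Measurable w) (l : ℕ) :
    Measurable (zSens r θ f₀ α w l) := by
  induction l with
  | zero => exact measurable_const
  | succ l ih =>
      exact (measurable_const.mul
        (((hw.comp (measurable_id.add_const (θ * l))).neg.mul (fDen_meas hf₀ hα l)).add
          ((measurable_const.sub (hα.comp (measurable_id.add_const (θ * l)))).mul ih)) :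
        Measurable fun t => Real.exp (r * θ) *
          (-(w (t + θ * (l : ℝ))) * fDen r θ f₀ α l t +
            (1 - α (t + θ * (l : ℝ))) * zSens r θ f₀ α w l t))

variable (hθ : 0 < θ)

/-- shifted control is BddAE (w.r.t. restriction to [0,θ]) -/
theorem shift_bddAE {A c : ℝ} (hα : Measurable α) (hab : ∀ᵐ t : ℝ, |α t| ≤ A) :
    BddAE (volume.restrict (Set.Ioc 0 θ)) (fun t => α (t + c)) :=
  ⟨(hα.comp (measurable_id.add_const c)).aestronglyMeasurable,
    A, ae_restrict_of_ae (ae_shift hab c)⟩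

theorem fDen_bddAE {M A : ℝ} (hf₀ : Measurable f₀) (hf₀b : ∀ x, |f₀ x| ≤ M)
    (hα : Measurable α) (hab : ∀ᵐ t : ℝ, |α t| ≤ A) (l : ℕ) :
    BddAE (volume.restrict (Set.Ioc 0 θ)) (fDen r θ f₀ α l) := by
  induction l with
  | zero =>
      refine ⟨(fDen_meas hf₀ hα 0).aestronglyMeasurable, Real.exp (|r| * θ) * M, ?_⟩
      filter_upwards [ae_restrict_mem measurableSet_Ioc] with t ht
      show |Real.exp (r * t) * f₀ (2 * Real.pi / θ * t)| ≤ _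
      rw [abs_mul, abs_of_pos (Real.exp_pos _)]
      refine mul_le_mul ?_ (hf₀b _) (abs_nonneg _) (Real.exp_pos _).le
      apply Real.exp_le_exp.2
      calc r * t ≤ |r * t| := le_abs_self _
        _ = |r| * |t| := abs_mul _ _
        _ ≤ |r| * θ := by
            refine mul_le_mul_of_nonneg_left ?_ (abs_nonneg r)
            rw [abs_of_pos ht.1]; exact ht.2
  | succ l ih =>
      have h1 : BddAE (volume.restrict (Set.Ioc 0 θ))
          (fun t => Real.exp (r * θ) * (1 - α (t + θ * (l : ℝ)))) :=
        (BddAE.const _ _).mul ((BddAE.const _ 1).sub (shift_bddAE hα hab))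
      exact h1.mul ih

theorem zSens_bddAE {M A W : ℝ} (hf₀ : Measurable f₀) (hf₀b : ∀ x, |f₀ x| ≤ M)
    (hα : Measurable α) (hab : ∀ᵐ t : ℝ, |α t| ≤ A)
    (hw : Measurable w) (hwb : ∀ x, |w x| ≤ W) (l : ℕ) :
    BddAE (volume.restrict (Set.Ioc 0 θ)) (zSens r θ f₀ α w l) := by
  induction l with
  | zero => exact BddAE.const _ 0
  | succ l ih =>
      have hws : BddAE (volume.restrict (Set.Ioc 0 θ)) (fun t => w (t + θ * (l:ℝ))) :=
        shift_bddAE hw (Filter.Eventually.of_forall hwb)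
      have hfd : BddAE (volume.restrict (Set.Ioc 0 θ)) (fDen r θ f₀ α l) :=
        fDen_bddAE hf₀ hf₀b hα hab l
      have h1 : BddAE (volume.restrict (Set.Ioc 0 θ))
          (fun t => -(w (t + θ * (l:ℝ))) * fDen r θ f₀ α l t) := hws.neg.mul hfd
      have h2 : BddAE (volume.restrict (Set.Ioc 0 θ))
          (fun t => (1 - α (t + θ * (l:ℝ))) * zSens r θ f₀ α w l t) :=
        ((BddAE.const _ 1).sub (shift_bddAE hα hab)).mul ih
      exact (BddAE.const _ (Real.exp (r * θ))).mul (h1.add h2)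


theorem remT_zero {ε t : ℝ} : remT r θ f₀ α w ε 0 t = 0 := by
  simp [remT, fDen, zSens]

theorem remT_succ {ε t : ℝ} {l : ℕ} : remT r θ f₀ α w ε (l + 1) t =
    Real.exp (r * θ) * ((1 - α (t + θ * (l : ℝ))) * remT r θ f₀ α w ε l t -
      ε * w (t + θ * (l : ℝ)) *
        (ε * zSens r θ f₀ α w l t + remT r θ f₀ α w ε l t)) := by
  simp only [remT, fDen, zSens]; ring

theorem remT_bound {M W : ℝ} (hf₀ : Measurable f₀) (hf₀b : ∀ x, |f₀ x| ≤ M)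
    (hα : Measurable α) (hab : ∀ᵐ t : ℝ, 0 ≤ α t ∧ α t ≤ 1)
    (hw : Measurable w) (hwb : ∀ x, |w x| ≤ W) (l : ℕ) :
    ∃ C, 0 ≤ C ∧ ∀ ε : ℝ, 0 ≤ ε → ε ≤ 1 →
      ∀ᵐ t ∂(volume.restrict (Set.Ioc 0 θ)), |remT r θ f₀ α w ε l t| ≤ C * ε ^ 2 := by
  have hW0 : 0 ≤ W := (abs_nonneg _).trans (hwb 0)
  have hab' : ∀ᵐ t : ℝ, |α t| ≤ 1 := by
    filter_upwards [hab] with t ht; rw [abs_le]; constructor <;> linarith [ht.1, ht.2]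
  induction l with
  | zero =>
      exact ⟨0, le_rfl, fun ε _ _ => Filter.Eventually.of_forall fun t => by
        simp [remT_zero]⟩
  | succ l ih =>
      obtain ⟨C, hC0, hC⟩ := ih
      obtain ⟨_, Z, hZ⟩ := zSens_bddAE (W := W) hf₀ hf₀b hα hab' hw hwb l
      have hZ0 : 0 ≤ max Z 0 := le_max_right _ _
      refine ⟨Real.exp (r * θ) * (C + W * (max Z 0 + C)), by positivity, fun ε hε0 hε1 => ?_⟩
      filter_upwards [hC ε hε0 hε1, hZ,
        ae_restrict_of_ae (ae_shift hab (θ * (l : ℝ)))] with t hR hz ha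
      rw [remT_succ, abs_mul, abs_of_pos (Real.exp_pos _)]
      rw [mul_assoc (Real.exp (r * θ))]
      refine mul_le_mul_of_nonneg_left ?_ (Real.exp_pos _).le
      have hz' : |zSens r θ f₀ α w l t| ≤ max Z 0 := hz.trans (le_max_left _ _)
      have ht1 : |(1 - α (t + θ * (l : ℝ))) * remT r θ f₀ α w ε l t| ≤ C * ε ^ 2 := by
        rw [abs_mul]
        have h1a : |1 - α (t + θ * (l : ℝ))| ≤ 1 := by
          rw [abs_le]; constructor <;> linarith [ha.1, ha.2]
        calc |1 - α (t + θ * (l : ℝ))| * |remT r θ f₀ α w ε l t|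
            ≤ 1 * (C * ε ^ 2) := mul_le_mul h1a hR (abs_nonneg _) zero_le_one
          _ = C * ε ^ 2 := one_mul _
      have ht2 : |ε * w (t + θ * (l : ℝ)) *
          (ε * zSens r θ f₀ α w l t + remT r θ f₀ α w ε l t)|
          ≤ W * (max Z 0 + C) * ε ^ 2 := by
        rw [abs_mul, abs_mul, abs_of_nonneg hε0]
        have h2 : |ε * zSens r θ f₀ α w l t + remT r θ f₀ α w ε l t|
            ≤ ε * max Z 0 + C * ε ^ 2 := by
          refine (abs_add_le _ _).trans (add_le_add ?_ hR)
          rw [abs_mul, abs_of_nonneg hε0]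
          exact mul_le_mul_of_nonneg_left hz' hε0
        calc ε * |w (t + θ * (l : ℝ))| * |ε * zSens r θ f₀ α w l t + remT r θ f₀ α w ε l t|
            ≤ ε * W * (ε * max Z 0 + C * ε ^ 2) := by
              refine mul_le_mul (mul_le_mul_of_nonneg_left (hwb _) hε0) h2 (abs_nonneg _) ?_
              positivity
          _ ≤ W * (max Z 0 + C) * ε ^ 2 := by
              nlinarith [mul_nonneg (mul_nonneg hW0 hC0)
                (mul_nonneg (sq_nonneg ε) (sub_nonneg.2 hε1))]
      calc |(1 - α (t + θ * (l : ℝ))) * remT r θ f₀ α w ε l t -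
            ε * w (t + θ * (l : ℝ)) *
              (ε * zSens r θ f₀ α w l t + remT r θ f₀ α w ε l t)|
          ≤ C * ε ^ 2 + W * (max Z 0 + C) * ε ^ 2 := (abs_sub _ _).trans (add_le_add ht1 ht2)
        _ = (C + W * (max Z 0 + C)) * ε ^ 2 := by ring

/-- pointwise second-order bound for the revenue integrand -/
theorem Q_bound {a ww f z R E ε W F Z C Eb : ℝ}
    (ha0 : 0 ≤ a) (ha1 : a ≤ 1) (hww : |ww| ≤ W) (hf : |f| ≤ F) (hz : |z| ≤ Z)
    (hR : |R| ≤ C * ε ^ 2) (hε0 : 0 ≤ ε) (hε1 : ε ≤ 1) (hE0 : 0 ≤ E) (hE : E ≤ Eb)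
    (hC : 0 ≤ C) :
    |E * ((a + ε * ww) * (1 - (a + ε * ww)) * (f + ε * z + R)) - E * (a * (1 - a) * f) -
        ε * (E * (ww * (1 - 2 * a) * f + a * (1 - a) * z))| ≤
      Eb * ((C + W * (Z + C) + W ^ 2 * (F + Z + C)) * ε ^ 2) := by
  have hW0 : 0 ≤ W := (abs_nonneg _).trans hww
  have hF0 : 0 ≤ F := (abs_nonneg _).trans hf
  have hZ0 : 0 ≤ Z := (abs_nonneg _).trans hz
  have hQ : E * ((a + ε * ww) * (1 - (a + ε * ww)) * (f + ε * z + R)) - E * (a * (1 - a) * f) -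
      ε * (E * (ww * (1 - 2 * a) * f + a * (1 - a) * z)) =
      E * (a * (1 - a) * R + ε * ww * (1 - 2 * a) * (ε * z + R) -
        ε ^ 2 * ww ^ 2 * (f + ε * z + R)) := by ring
  rw [hQ, abs_mul, abs_of_nonneg hE0]
  refine mul_le_mul hE ?_ (abs_nonneg _) ((hE0.trans hE))
  have t1 : |a * (1 - a) * R| ≤ C * ε ^ 2 := by
    rw [abs_mul]
    have : |a * (1 - a)| ≤ 1 := by rw [abs_le]; constructor <;> nlinarith
    calc |a * (1 - a)| * |R| ≤ 1 * (C * ε ^ 2) :=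
      mul_le_mul this hR (abs_nonneg _) zero_le_one
      _ = C * ε ^ 2 := one_mul _
  have t2 : |ε * ww * (1 - 2 * a) * (ε * z + R)| ≤ W * (Z + C) * ε ^ 2 := by
    rw [abs_mul, abs_mul, abs_mul, abs_of_nonneg hε0]
    have h12 : |1 - 2 * a| ≤ 1 := by rw [abs_le]; constructor <;> linarith
    have hzR : |ε * z + R| ≤ ε * Z + C * ε ^ 2 := by
      refine (abs_add_le _ _).trans (add_le_add ?_ hR)
      rw [abs_mul, abs_of_nonneg hε0]; exact mul_le_mul_of_nonneg_left hz hε0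
    calc ε * |ww| * |1 - 2 * a| * |ε * z + R|
        ≤ ε * W * 1 * (ε * Z + C * ε ^ 2) := by
          refine mul_le_mul (mul_le_mul (mul_le_mul_of_nonneg_left hww hε0) h12
            (abs_nonneg _) (by positivity)) hzR (abs_nonneg _) (by positivity)
      _ ≤ W * (Z + C) * ε ^ 2 := by
          nlinarith [mul_nonneg (mul_nonneg hW0 hC)
            (mul_nonneg (sq_nonneg ε) (sub_nonneg.2 hε1))]
  have t3 : |ε ^ 2 * ww ^ 2 * (f + ε * z + R)| ≤ W ^ 2 * (F + Z + C) * ε ^ 2 := by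
    rw [abs_mul, abs_mul]
    have hww2 : |ww ^ 2| ≤ W ^ 2 := by
      rw [abs_pow]
      exact pow_le_pow_left₀ (abs_nonneg _) hww 2
    have hfzR : |f + ε * z + R| ≤ F + Z + C := by
      refine ((abs_add_le _ _).trans (add_le_add (abs_add_le _ _) le_rfl)).trans ?_
      have h1 : |ε * z| ≤ Z := by
        rw [abs_mul, abs_of_nonneg hε0]; nlinarith [abs_nonneg z]
      have hee : ε ^ 2 ≤ 1 := by nlinarith
      have h2 : |R| ≤ C := hR.trans (by nlinarith)
      linarith
    have hε2 : |ε ^ 2| = ε ^ 2 := abs_of_nonneg (by positivity)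
    rw [hε2]
    calc ε ^ 2 * |ww ^ 2| * |f + ε * z + R| ≤ ε ^ 2 * W ^ 2 * (F + Z + C) := by
          refine mul_le_mul (mul_le_mul_of_nonneg_left hww2 (by positivity)) hfzR
            (abs_nonneg _) (by positivity)
      _ = W ^ 2 * (F + Z + C) * ε ^ 2 := by ring
  calc |a * (1 - a) * R + ε * ww * (1 - 2 * a) * (ε * z + R) -
        ε ^ 2 * ww ^ 2 * (f + ε * z + R)|
      ≤ |a * (1 - a) * R + ε * ww * (1 - 2 * a) * (ε * z + R)| +
        |ε ^ 2 * ww ^ 2 * (f + ε * z + R)| := abs_sub _ _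
    _ ≤ (|a * (1 - a) * R| + |ε * ww * (1 - 2 * a) * (ε * z + R)|) +
        |ε ^ 2 * ww ^ 2 * (f + ε * z + R)| := add_le_add (abs_add_le _ _) le_rfl
    _ ≤ (C * ε ^ 2 + W * (Z + C) * ε ^ 2) + W ^ 2 * (F + Z + C) * ε ^ 2 := by
        gcongr
    _ = (C + W * (Z + C) + W ^ 2 * (F + Z + C)) * ε ^ 2 := by ring

end Bounds


/-- revenue integrand -/
noncomputable def gI (r ρ θ : ℝ) (f₀ α : ℝ → ℝ) (l : ℕ) (t : ℝ) : ℝ :=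
  Real.exp (-ρ * (t + θ * (l : ℝ))) * α (t + θ * (l : ℝ)) *
    (1 - α (t + θ * (l : ℝ))) * fDen r θ f₀ α l t

/-- first-variation integrand -/
noncomputable def dI (r ρ θ : ℝ) (f₀ α w : ℝ → ℝ) (l : ℕ) (t : ℝ) : ℝ :=
  Real.exp (-ρ * (t + θ * (l : ℝ))) *
    (w (t + θ * (l : ℝ)) * (1 - 2 * α (t + θ * (l : ℝ))) * fDen r θ f₀ α l t +
      α (t + θ * (l : ℝ)) * (1 - α (t + θ * (l : ℝ))) * zSens r θ f₀ α w l t)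

section Main

variable {θ r ρ : ℝ} {f₀ α w : ℝ → ℝ}

theorem expShift_bddAE (hθ : 0 < θ) (l : ℕ) :
    BddAE (volume.restrict (Set.Ioc 0 θ))
      (fun t => Real.exp (-ρ * (t + θ * (l : ℝ)))) := by
  refine ⟨(Real.measurable_exp.comp ((measurable_id.add_const _).const_mul (-ρ))).aestronglyMeasurable,
    Real.exp (|ρ| * (θ * ((l : ℝ) + 1))), ?_⟩
  filter_upwards [ae_restrict_mem measurableSet_Ioc] with t ht
  rw [abs_of_pos (Real.exp_pos _)]
  apply Real.exp_le_exp.2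
  have h1 : 0 ≤ t + θ * (l : ℝ) := by
    nlinarith [ht.1, mul_nonneg hθ.le (Nat.cast_nonneg (α := ℝ) l)]
  calc -ρ * (t + θ * (l : ℝ)) ≤ |(-ρ) * (t + θ * (l : ℝ))| := le_abs_self _
    _ = |ρ| * (t + θ * (l : ℝ)) := by rw [abs_mul, abs_neg, abs_of_nonneg h1]
    _ ≤ |ρ| * (θ * ((l : ℝ) + 1)) := by
        refine mul_le_mul_of_nonneg_left ?_ (abs_nonneg ρ)
        have : t ≤ θ := ht.2
        nlinarith [Nat.cast_nonneg (α := ℝ) l, ht.1]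

theorem gI_bddAE {M A : ℝ} (hθ : 0 < θ) (hf₀ : Measurable f₀) (hf₀b : ∀ x, |f₀ x| ≤ M)
    (hαm : Measurable α) (hab : ∀ᵐ t : ℝ, |α t| ≤ A) (l : ℕ) :
    BddAE (volume.restrict (Set.Ioc 0 θ)) (gI r ρ θ f₀ α l) :=
  (((expShift_bddAE hθ l).mul (shift_bddAE hαm hab)).mul
    ((BddAE.const _ 1).sub (shift_bddAE hαm hab))).mul (fDen_bddAE hf₀ hf₀b hαm hab l)

theorem dI_bddAE {M W : ℝ} (hθ : 0 < θ) (hf₀ : Measurable f₀) (hf₀b : ∀ x, |f₀ x| ≤ M)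
    (hαm : Measurable α) (hab : ∀ᵐ t : ℝ, |α t| ≤ 1)
    (hw : Measurable w) (hwb : ∀ x, |w x| ≤ W) (l : ℕ) :
    BddAE (volume.restrict (Set.Ioc 0 θ)) (dI r ρ θ f₀ α w l) := by
  have h1 : BddAE (volume.restrict (Set.Ioc 0 θ))
      (fun t => w (t + θ * (l : ℝ)) * (1 - 2 * α (t + θ * (l : ℝ))) * fDen r θ f₀ α l t) :=
    ((shift_bddAE hw (Filter.Eventually.of_forall hwb)).mul
      ((BddAE.const _ 1).sub ((BddAE.const _ 2).mul (shift_bddAE hαm hab)))).mul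
      (fDen_bddAE hf₀ hf₀b hαm hab l)
  have h2 : BddAE (volume.restrict (Set.Ioc 0 θ))
      (fun t => α (t + θ * (l : ℝ)) * (1 - α (t + θ * (l : ℝ))) * zSens r θ f₀ α w l t) :=
    ((shift_bddAE hαm hab).mul ((BddAE.const _ 1).sub (shift_bddAE hαm hab))).mul
      (zSens_bddAE hf₀ hf₀b hαm hab hw hwb l)
  exact (expShift_bddAE hθ l).mul (h1.add h2)

theorem expansion_term {M W : ℝ} (hθ : 0 < θ) (hf₀ : Measurable f₀) (hf₀b : ∀ x, |f₀ x| ≤ M)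
    (hαm : Measurable α) (hab : ∀ᵐ t : ℝ, 0 ≤ α t ∧ α t ≤ 1)
    (hw : Measurable w) (hwb : ∀ x, |w x| ≤ W) (l : ℕ) {b : ℝ} (hb0 : 0 ≤ b) (hbθ : b ≤ θ) :
    ∃ C, 0 ≤ C ∧ ∀ ε : ℝ, 0 ≤ ε → ε ≤ 1 →
      |(∫ t in Set.Ioc (0:ℝ) b, gI r ρ θ f₀ (fun s => α s + ε * w s) l t) -
        (∫ t in Set.Ioc (0:ℝ) b, gI r ρ θ f₀ α l t) -
        ε * ∫ t in Set.Ioc (0:ℝ) b, dI r ρ θ f₀ α w l t| ≤ C * ε ^ 2 := by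
  have hW0 : 0 ≤ W := (abs_nonneg _).trans (hwb 0)
  have hab' : ∀ᵐ t : ℝ, |α t| ≤ 1 := by
    filter_upwards [hab] with t ht; rw [abs_le]; constructor <;> linarith [ht.1, ht.2]
  obtain ⟨-, F, hF⟩ := fDen_bddAE (r := r) (A := 1) hf₀ hf₀b hαm hab' l
  obtain ⟨-, Z, hZ⟩ := zSens_bddAE (r := r) (W := W) hf₀ hf₀b hαm hab' hw hwb l
  obtain ⟨C, hC0, hC⟩ := remT_bound (r := r) hf₀ hf₀b hαm hab hw hwb l
  set F' := max F 0 with hF'def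
  set Z' := max Z 0 with hZ'def
  set Eb := Real.exp (|ρ| * (θ * ((l : ℝ) + 1))) with hEbdef
  set K := C + W * (Z' + C) + W ^ 2 * (F' + Z' + C) with hKdef
  have hF'0 : (0:ℝ) ≤ F' := le_max_right _ _
  have hZ'0 : (0:ℝ) ≤ Z' := le_max_right _ _
  have hK0 : 0 ≤ K := by
    have h1 : 0 ≤ W * (Z' + C) := mul_nonneg hW0 (add_nonneg hZ'0 hC0)
    have h2 : 0 ≤ W ^ 2 * (F' + Z' + C) :=
      mul_nonneg (sq_nonneg W) (add_nonneg (add_nonneg hF'0 hZ'0) hC0)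
    have := hC0
    rw [hKdef]; linarith
  refine ⟨Eb * K * θ, by positivity, fun ε hε0 hε1 => ?_⟩
  have hsub : Set.Ioc (0:ℝ) b ⊆ Set.Ioc (0:ℝ) θ := Set.Ioc_subset_Ioc le_rfl hbθ
  have hmono := Measure.restrict_mono hsub
    (le_rfl : (volume : Measure ℝ) ≤ volume)
  -- the perturbed control
  have hαεm : Measurable (fun s => α s + ε * w s) := hαm.add (hw.const_mul ε)
  have hαεb : ∀ᵐ t : ℝ, |α t + ε * w t| ≤ 1 + W := by
    filter_upwards [hab] with t ht
    calc |α t + ε * w t| ≤ |α t| + |ε * w t| := abs_add_le _ _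
      _ ≤ 1 + W := by
          rw [abs_mul, abs_of_nonneg hε0]
          have h1 : |α t| ≤ 1 := by rw [abs_le]; constructor <;> linarith [ht.1, ht.2]
          have h2 : ε * |w t| ≤ W := by
            calc ε * |w t| ≤ 1 * W := mul_le_mul hε1 (hwb t) (abs_nonneg _) zero_le_one
              _ = W := one_mul _
          linarith
  -- integrability
  have hIgε : Integrable (gI r ρ θ f₀ (fun s => α s + ε * w s) l)
      (volume.restrict (Set.Ioc (0:ℝ) b)) :=
    ((gI_bddAE (A := 1 + W) hθ hf₀ hf₀b hαεm hαεb l).mono_set hsub).integrable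
  have hIg : Integrable (gI r ρ θ f₀ α l) (volume.restrict (Set.Ioc (0:ℝ) b)) :=
    ((gI_bddAE (A := 1) hθ hf₀ hf₀b hαm hab' l).mono_set hsub).integrable
  have hId : Integrable (dI r ρ θ f₀ α w l) (volume.restrict (Set.Ioc (0:ℝ) b)) :=
    ((dI_bddAE hθ hf₀ hf₀b hαm hab' hw hwb l).mono_set hsub).integrable
  have hcomb : (∫ t in Set.Ioc (0:ℝ) b, gI r ρ θ f₀ (fun s => α s + ε * w s) l t) -
      (∫ t in Set.Ioc (0:ℝ) b, gI r ρ θ f₀ α l t) -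
      ε * ∫ t in Set.Ioc (0:ℝ) b, dI r ρ θ f₀ α w l t =
      ∫ t in Set.Ioc (0:ℝ) b, (gI r ρ θ f₀ (fun s => α s + ε * w s) l t -
        gI r ρ θ f₀ α l t - ε * dI r ρ θ f₀ α w l t) := by
    have h1 : Integrable (fun t => gI r ρ θ f₀ (fun s => α s + ε * w s) l t -
        gI r ρ θ f₀ α l t) (volume.restrict (Set.Ioc (0:ℝ) b)) := hIgε.sub hIg
    have h2 : Integrable (fun t => ε * dI r ρ θ f₀ α w l t)
        (volume.restrict (Set.Ioc (0:ℝ) b)) := hId.const_mul ε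
    rw [← integral_const_mul, ← integral_sub hIgε hIg, ← integral_sub h1 h2]
  rw [hcomb]
  -- pointwise bound
  have hpt : ∀ᵐ t ∂(volume.restrict (Set.Ioc (0:ℝ) b)),
      |gI r ρ θ f₀ (fun s => α s + ε * w s) l t - gI r ρ θ f₀ α l t -
        ε * dI r ρ θ f₀ α w l t| ≤ Eb * (K * ε ^ 2) := by
    filter_upwards [ae_restrict_mem measurableSet_Ioc,
      (hF.filter_mono (ae_mono hmono)),
      (hZ.filter_mono (ae_mono hmono)),
      ((hC ε hε0 hε1).filter_mono (ae_mono hmono)),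
      (ae_restrict_of_ae (ae_shift hab (θ * (l : ℝ)))).filter_mono (ae_mono hmono)]
      with t htm hFt hZt hCt hat
    have hfsplit : fDen r θ f₀ (fun s => α s + ε * w s) l t =
        fDen r θ f₀ α l t + ε * zSens r θ f₀ α w l t + remT r θ f₀ α w ε l t := by
      simp only [remT]; ring
    have hEpos : (0:ℝ) ≤ Real.exp (-ρ * (t + θ * (l : ℝ))) := (Real.exp_pos _).le
    have hEle : Real.exp (-ρ * (t + θ * (l : ℝ))) ≤ Eb := by
      apply Real.exp_le_exp.2
      have h1 : 0 ≤ t + θ * (l : ℝ) := by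
        have := htm.1
        have : (0:ℝ) ≤ θ * (l : ℝ) := by positivity
        linarith [htm.1]
      calc -ρ * (t + θ * (l : ℝ)) ≤ |(-ρ) * (t + θ * (l : ℝ))| := le_abs_self _
        _ = |ρ| * (t + θ * (l : ℝ)) := by rw [abs_mul, abs_neg, abs_of_nonneg h1]
        _ ≤ |ρ| * (θ * ((l : ℝ) + 1)) := by
            refine mul_le_mul_of_nonneg_left ?_ (abs_nonneg ρ)
            have ht2 : t ≤ θ := htm.2.trans hbθ
            nlinarith [Nat.cast_nonneg (α := ℝ) l, htm.1]
    have hkey : gI r ρ θ f₀ (fun s => α s + ε * w s) l t - gI r ρ θ f₀ α l t -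
        ε * dI r ρ θ f₀ α w l t =
        Real.exp (-ρ * (t + θ * (l : ℝ))) *
          ((α (t + θ * (l : ℝ)) + ε * w (t + θ * (l : ℝ))) *
            (1 - (α (t + θ * (l : ℝ)) + ε * w (t + θ * (l : ℝ)))) *
            (fDen r θ f₀ α l t + ε * zSens r θ f₀ α w l t + remT r θ f₀ α w ε l t)) -
          Real.exp (-ρ * (t + θ * (l : ℝ))) *
            (α (t + θ * (l : ℝ)) * (1 - α (t + θ * (l : ℝ))) * fDen r θ f₀ α l t) -
          ε * (Real.exp (-ρ * (t + θ * (l : ℝ))) *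
            (w (t + θ * (l : ℝ)) * (1 - 2 * α (t + θ * (l : ℝ))) * fDen r θ f₀ α l t +
              α (t + θ * (l : ℝ)) * (1 - α (t + θ * (l : ℝ))) * zSens r θ f₀ α w l t)) := by
      simp only [gI, dI, hfsplit]; ring
    rw [hkey, hKdef]
    exact Q_bound hat.1 hat.2 (hwb _) (hFt.trans (le_max_left _ _))
      (hZt.trans (le_max_left _ _)) hCt hε0 hε1 hEpos hEle hC0
  -- integrate the bound
  have hInt : Integrable (fun t => gI r ρ θ f₀ (fun s => α s + ε * w s) l t -
      gI r ρ θ f₀ α l t - ε * dI r ρ θ f₀ α w l t)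
      (volume.restrict (Set.Ioc (0:ℝ) b)) := (hIgε.sub hIg).sub (hId.const_mul ε)
  have hbnd : ‖∫ t in Set.Ioc (0:ℝ) b, (gI r ρ θ f₀ (fun s => α s + ε * w s) l t -
      gI r ρ θ f₀ α l t - ε * dI r ρ θ f₀ α w l t)‖ ≤
      Eb * (K * ε ^ 2) * ((volume.restrict (Set.Ioc (0:ℝ) b)) Set.univ).toReal := by
    apply norm_integral_le_of_norm_le_const
    filter_upwards [hpt] with t ht
    simpa using ht
  rw [Real.norm_eq_abs] at hbnd
  refine hbnd.trans ?_
  have hm : ((volume.restrict (Set.Ioc (0:ℝ) b)) Set.univ).toReal = b := by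
    rw [Measure.restrict_apply_univ, Real.volume_Ioc, ENNReal.toReal_ofReal (by linarith), sub_zero]
  rw [hm]
  calc Eb * (K * ε ^ 2) * b ≤ Eb * (K * ε ^ 2) * θ := by
        refine mul_le_mul_of_nonneg_left hbθ ?_
        positivity
    _ = Eb * K * θ * ε ^ 2 := by ring


theorem revenue_eq {T : ℝ} {k : ℕ} (hθ : 0 ≤ θ) (hT' : 0 ≤ T - (k : ℝ) * θ) (α : ℝ → ℝ) :
    revenue r ρ θ T k f₀ α =
      (∑ l ∈ Finset.range k, ∫ t in Set.Ioc (0:ℝ) θ, gI r ρ θ f₀ α l t) +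
        ∫ t in Set.Ioc (0:ℝ) (T - (k : ℝ) * θ), gI r ρ θ f₀ α k t := by
  unfold revenue gI
  rw [intervalIntegral.integral_of_le hT']
  congr 1
  refine Finset.sum_congr rfl fun l _ => ?_
  rw [intervalIntegral.integral_of_le hθ]

theorem p_bddAE {T : ℝ} {k : ℕ} (hθ : 0 < θ) (hT'0 : 0 ≤ T - θ * (k : ℝ))
    (hT'θ : T - θ * (k : ℝ) ≤ θ)
    (hαm : Measurable α) (hab : ∀ᵐ t : ℝ, |α t| ≤ 1)
    (p : ℕ → ℝ → ℝ)
    (hpk₁ : ∀ t : ℝ, 0 ≤ t → t < T - θ * (k : ℝ) →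
      p k t = Real.exp (-ρ * (t + θ * (k : ℝ))) * α (t + θ * (k : ℝ)) *
        (1 - α (t + θ * (k : ℝ))))
    (hpk₂ : ∀ t : ℝ, T - θ * (k : ℝ) ≤ t → t < θ → p k t = 0)
    (hpl : ∀ l < k, ∀ t ∈ Set.Ico (0 : ℝ) θ,
      p l t = Real.exp (r * θ) * (1 - α (t + θ * (l : ℝ))) * p (l + 1) t +
        Real.exp (-ρ * (t + θ * (l : ℝ))) * α (t + θ * (l : ℝ)) *
          (1 - α (t + θ * (l : ℝ)))) :
    ∀ j l, l + j = k → BddAE (volume.restrict (Set.Ioc 0 θ)) (p l) := by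
  have hbase : BddAE (volume.restrict (Set.Ioc 0 θ)) (p k) := by
    set q : ℝ → ℝ := fun t => if t < T - θ * (k : ℝ) then
      Real.exp (-ρ * (t + θ * (k : ℝ))) * α (t + θ * (k : ℝ)) *
        (1 - α (t + θ * (k : ℝ))) else 0 with hq
    have hqb : BddAE (volume.restrict (Set.Ioc 0 θ)) q := by
      obtain ⟨-, B, hB⟩ := (((expShift_bddAE (ρ := ρ) hθ k).mul (shift_bddAE hαm hab)).mul
        ((BddAE.const _ 1).sub (shift_bddAE hαm hab)))
      refine ⟨?_, max B 0, ?_⟩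
      · refine (Measurable.ite (measurableSet_lt measurable_id measurable_const) ?_
          measurable_const).aestronglyMeasurable
        exact ((Real.measurable_exp.comp ((measurable_id.add_const _).const_mul (-ρ))).mul
          (hαm.comp (measurable_id.add_const _))).mul
          (measurable_const.sub (hαm.comp (measurable_id.add_const _)))
      · filter_upwards [hB] with t hBt
        by_cases h : t < T - θ * (k : ℝ)
        · simp only [hq, if_pos h]
          exact hBt.trans (le_max_left _ _)
        · simp only [hq, if_neg h, abs_zero]
          exact le_max_right _ _
    refine BddAE.congr ?_ hqb
    filter_upwards [ae_restrict_mem measurableSet_Ioc, ae_restrict_of_ae (ae_ne θ)]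
      with t ht htθ
    have htlt : t < θ := lt_of_le_of_ne ht.2 htθ
    by_cases h : t < T - θ * (k : ℝ)
    · rw [hpk₁ t ht.1.le h]; simp only [hq, if_pos h]
    · rw [hpk₂ t (not_lt.1 h) htlt]; simp only [hq, if_neg h]
  intro j
  induction j with
  | zero =>
      intro l hl
      have hlk : l = k := by omega
      subst hlk; exact hbase
  | succ j ih =>
      intro l hl
      have hlk : l < k := by omega
      have hnext : BddAE (volume.restrict (Set.Ioc 0 θ)) (p (l + 1)) := ih (l + 1) (by omega)
      have hrhs : BddAE (volume.restrict (Set.Ioc 0 θ))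
          (fun t => Real.exp (r * θ) * (1 - α (t + θ * (l : ℝ))) * p (l + 1) t +
            Real.exp (-ρ * (t + θ * (l : ℝ))) * α (t + θ * (l : ℝ)) *
              (1 - α (t + θ * (l : ℝ)))) :=
        (((BddAE.const _ _).mul ((BddAE.const _ 1).sub (shift_bddAE hαm hab))).mul hnext).add
          (((expShift_bddAE hθ l).mul (shift_bddAE hαm hab)).mul
            ((BddAE.const _ 1).sub (shift_bddAE hαm hab)))
      refine BddAE.congr ?_ hrhs
      filter_upwards [ae_restrict_mem measurableSet_Ioc, ae_restrict_of_ae (ae_ne θ)]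
        with t ht htθ
      exact hpl l hlk t ⟨ht.1.le, lt_of_le_of_ne ht.2 htθ⟩


theorem adjoint_eq {T : ℝ} {k : ℕ} (hθ : 0 < θ)
    (hT'0 : 0 ≤ T - (k : ℝ) * θ) (hT'θ : T - (k : ℝ) * θ ≤ θ)
    {M W : ℝ} (hf₀m : Measurable f₀) (hM : ∀ x, |f₀ x| ≤ M)
    (hαm : Measurable α) (hab1 : ∀ᵐ t : ℝ, |α t| ≤ 1)
    (hwm : Measurable w) (hW : ∀ x, |w x| ≤ W)
    (p : ℕ → ℝ → ℝ)
    (hpk₁ : ∀ t : ℝ, 0 ≤ t → t < T - θ * (k : ℝ) →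
      p k t = Real.exp (-ρ * (t + θ * (k : ℝ))) * α (t + θ * (k : ℝ)) *
        (1 - α (t + θ * (k : ℝ))))
    (hpk₂ : ∀ t : ℝ, T - θ * (k : ℝ) ≤ t → t < θ → p k t = 0)
    (hpl : ∀ l < k, ∀ t ∈ Set.Ico (0 : ℝ) θ,
      p l t = Real.exp (r * θ) * (1 - α (t + θ * (l : ℝ))) * p (l + 1) t +
        Real.exp (-ρ * (t + θ * (l : ℝ))) * α (t + θ * (l : ℝ)) *
          (1 - α (t + θ * (l : ℝ)))) :
    (∑ l ∈ Finset.range k, ∫ t in Set.Ioc (0:ℝ) θ,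
        w (t + θ * (l : ℝ)) *
          (Real.exp (-ρ * (t + θ * (l : ℝ))) * (1 - 2 * α (t + θ * (l : ℝ))) -
            Real.exp (r * θ) * p (l + 1) t) * fDen r θ f₀ α l t) +
      (∫ t in Set.Ioc (0:ℝ) (T - (k : ℝ) * θ),
        Real.exp (-ρ * (t + θ * (k : ℝ))) * w (t + θ * (k : ℝ)) *
          (1 - 2 * α (t + θ * (k : ℝ))) * fDen r θ f₀ α k t) =
    (∑ l ∈ Finset.range k, ∫ t in Set.Ioc (0:ℝ) θ, dI r ρ θ f₀ α w l t) +
      ∫ t in Set.Ioc (0:ℝ) (T - (k : ℝ) * θ), dI r ρ θ f₀ α w k t := by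
  have hTc : T - θ * (k : ℝ) = T - (k : ℝ) * θ := by ring
  set T' := T - (k : ℝ) * θ with hT'def
  -- basic BddAE facts
  have hA : ∀ l : ℕ, BddAE (volume.restrict (Set.Ioc 0 θ)) (fun t => α (t + θ * (l : ℝ))) :=
    fun l => shift_bddAE hαm hab1
  have hWs : ∀ l : ℕ, BddAE (volume.restrict (Set.Ioc 0 θ)) (fun t => w (t + θ * (l : ℝ))) :=
    fun l => shift_bddAE hwm (Filter.Eventually.of_forall hW)
  have hf : ∀ l : ℕ, BddAE (volume.restrict (Set.Ioc 0 θ)) (fDen r θ f₀ α l) :=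
    fun l => fDen_bddAE hf₀m hM hαm hab1 l
  have hz : ∀ l : ℕ, BddAE (volume.restrict (Set.Ioc 0 θ)) (zSens r θ f₀ α w l) :=
    fun l => zSens_bddAE hf₀m hM hαm hab1 hwm hW l
  have hp : ∀ l ≤ k, BddAE (volume.restrict (Set.Ioc 0 θ)) (p l) := by
    intro l hl
    exact p_bddAE hθ (by linarith [hTc]) (by linarith [hTc]) hαm hab1 p hpk₁ hpk₂ hpl
      (k - l) l (by omega)
  -- composite integrands
  have hwbig : ∀ l : ℕ, BddAE (volume.restrict (Set.Ioc 0 θ))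
      (fun t => Real.exp (-ρ * (t + θ * (l : ℝ))) * w (t + θ * (l : ℝ)) *
        (1 - 2 * α (t + θ * (l : ℝ))) * fDen r θ f₀ α l t) :=
    fun l => (((expShift_bddAE hθ l).mul (hWs l)).mul
      ((BddAE.const _ 1).sub ((BddAE.const _ 2).mul (hA l)))).mul (hf l)
  have hzbig : ∀ l : ℕ, BddAE (volume.restrict (Set.Ioc 0 θ))
      (fun t => Real.exp (-ρ * (t + θ * (l : ℝ))) * α (t + θ * (l : ℝ)) *
        (1 - α (t + θ * (l : ℝ))) * zSens r θ f₀ α w l t) :=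
    fun l => (((expShift_bddAE hθ l).mul (hA l)).mul
      ((BddAE.const _ 1).sub (hA l))).mul (hz l)
  have hpz : ∀ l ≤ k, BddAE (volume.restrict (Set.Ioc 0 θ))
      (fun t => p l t * zSens r θ f₀ α w l t) :=
    fun l hl => (hp l hl).mul (hz l)
  have hpwf : ∀ l < k, BddAE (volume.restrict (Set.Ioc 0 θ))
      (fun t => Real.exp (r * θ) * p (l + 1) t * (w (t + θ * (l : ℝ)) * fDen r θ f₀ α l t)) :=
    fun l hl => ((BddAE.const _ _).mul (hp (l + 1) hl)).mul ((hWs l).mul (hf l))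
  set P : ℕ → ℝ := fun l => ∫ t in Set.Ioc (0:ℝ) θ, p l t * zSens r θ f₀ α w l t with hPdef
  -- step 1: LHS summand split
  have heq1 : ∀ l ∈ Finset.range k,
      (∫ t in Set.Ioc (0:ℝ) θ, w (t + θ * (l : ℝ)) *
        (Real.exp (-ρ * (t + θ * (l : ℝ))) * (1 - 2 * α (t + θ * (l : ℝ))) -
          Real.exp (r * θ) * p (l + 1) t) * fDen r θ f₀ α l t) =
      (∫ t in Set.Ioc (0:ℝ) θ, Real.exp (-ρ * (t + θ * (l : ℝ))) * w (t + θ * (l : ℝ)) *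
        (1 - 2 * α (t + θ * (l : ℝ))) * fDen r θ f₀ α l t) -
      ∫ t in Set.Ioc (0:ℝ) θ, Real.exp (r * θ) * p (l + 1) t *
        (w (t + θ * (l : ℝ)) * fDen r θ f₀ α l t) := by
    intro l hl
    have hlk : l < k := Finset.mem_range.1 hl
    have hfun : (fun t => w (t + θ * (l : ℝ)) *
        (Real.exp (-ρ * (t + θ * (l : ℝ))) * (1 - 2 * α (t + θ * (l : ℝ))) -
          Real.exp (r * θ) * p (l + 1) t) * fDen r θ f₀ α l t) =
        fun t => (Real.exp (-ρ * (t + θ * (l : ℝ))) * w (t + θ * (l : ℝ)) *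
          (1 - 2 * α (t + θ * (l : ℝ))) * fDen r θ f₀ α l t) -
          Real.exp (r * θ) * p (l + 1) t * (w (t + θ * (l : ℝ)) * fDen r θ f₀ α l t) := by
      funext t; ring
    rw [hfun, integral_sub (hwbig l).integrable (hpwf l hlk).integrable]
  -- step 2: dI split over Ioc 0 θ
  have hdfun : ∀ l : ℕ, dI r ρ θ f₀ α w l = fun t =>
      (Real.exp (-ρ * (t + θ * (l : ℝ))) * w (t + θ * (l : ℝ)) *
        (1 - 2 * α (t + θ * (l : ℝ))) * fDen r θ f₀ α l t) +
      (Real.exp (-ρ * (t + θ * (l : ℝ))) * α (t + θ * (l : ℝ)) *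
        (1 - α (t + θ * (l : ℝ))) * zSens r θ f₀ α w l t) := by
    intro l; funext t; simp only [dI]; ring
  have heq2 : ∀ l ∈ Finset.range k,
      (∫ t in Set.Ioc (0:ℝ) θ, dI r ρ θ f₀ α w l t) =
      (∫ t in Set.Ioc (0:ℝ) θ, Real.exp (-ρ * (t + θ * (l : ℝ))) * w (t + θ * (l : ℝ)) *
        (1 - 2 * α (t + θ * (l : ℝ))) * fDen r θ f₀ α l t) +
      ∫ t in Set.Ioc (0:ℝ) θ, Real.exp (-ρ * (t + θ * (l : ℝ))) * α (t + θ * (l : ℝ)) *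
        (1 - α (t + θ * (l : ℝ))) * zSens r θ f₀ α w l t := by
    intro l _
    rw [hdfun l, integral_add (hwbig l).integrable (hzbig l).integrable]
  have hsubT : Set.Ioc (0:ℝ) T' ⊆ Set.Ioc (0:ℝ) θ := Set.Ioc_subset_Ioc le_rfl hT'θ
  have heq2k : (∫ t in Set.Ioc (0:ℝ) T', dI r ρ θ f₀ α w k t) =
      (∫ t in Set.Ioc (0:ℝ) T', Real.exp (-ρ * (t + θ * (k : ℝ))) * w (t + θ * (k : ℝ)) *
        (1 - 2 * α (t + θ * (k : ℝ))) * fDen r θ f₀ α k t) +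
      ∫ t in Set.Ioc (0:ℝ) T', Real.exp (-ρ * (t + θ * (k : ℝ))) * α (t + θ * (k : ℝ)) *
        (1 - α (t + θ * (k : ℝ))) * zSens r θ f₀ α w k t := by
    rw [hdfun k, integral_add ((hwbig k).mono_set hsubT).integrable
      ((hzbig k).mono_set hsubT).integrable]
  -- step 3: the k-th z-term equals P k
  have heqzk : (∫ t in Set.Ioc (0:ℝ) T', Real.exp (-ρ * (t + θ * (k : ℝ))) *
      α (t + θ * (k : ℝ)) * (1 - α (t + θ * (k : ℝ))) * zSens r θ f₀ α w k t) = P k := by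
    have hsplit : Set.Ioc (0:ℝ) θ = Set.Ioc (0:ℝ) T' ∪ Set.Ioc T' θ :=
      (Set.Ioc_union_Ioc_eq_Ioc hT'0 hT'θ).symm
    have hdisj : Disjoint (Set.Ioc (0:ℝ) T') (Set.Ioc T' θ) := Set.Ioc_disjoint_Ioc_of_le le_rfl
    have hPk : P k = (∫ t in Set.Ioc (0:ℝ) T', p k t * zSens r θ f₀ α w k t) +
        ∫ t in Set.Ioc T' θ, p k t * zSens r θ f₀ α w k t := by
      rw [hPdef]
      simp only []
      rw [hsplit, setIntegral_union hdisj measurableSet_Ioc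
        (((hpz k le_rfl).mono_set (hsplit ▸ Set.subset_union_left)).integrable)
        (((hpz k le_rfl).mono_set (hsplit ▸ Set.subset_union_right)).integrable)]
    have hzero : (∫ t in Set.Ioc T' θ, p k t * zSens r θ f₀ α w k t) = 0 := by
      have hae : ∀ᵐ t ∂(volume.restrict (Set.Ioc T' θ)),
          p k t * zSens r θ f₀ α w k t = 0 := by
        filter_upwards [ae_restrict_mem measurableSet_Ioc, ae_restrict_of_ae (ae_ne θ)]
          with t ht htθ
        rw [hpk₂ t (by linarith [ht.1, hTc]) (lt_of_le_of_ne ht.2 htθ), zero_mul]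
      rw [integral_congr_ae hae, integral_zero]
    have hfirst : (∫ t in Set.Ioc (0:ℝ) T', p k t * zSens r θ f₀ α w k t) =
        ∫ t in Set.Ioc (0:ℝ) T', Real.exp (-ρ * (t + θ * (k : ℝ))) *
          α (t + θ * (k : ℝ)) * (1 - α (t + θ * (k : ℝ))) * zSens r θ f₀ α w k t := by
      apply integral_congr_ae
      filter_upwards [ae_restrict_mem measurableSet_Ioc, ae_restrict_of_ae (ae_ne T')]
        with t ht htT
      rw [hpk₁ t ht.1.le (by
        have := lt_of_le_of_ne ht.2 htT
        linarith [hTc])]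
    rw [hPk, hzero, add_zero, hfirst]
  -- step 4: the l-th z-term telescopes
  have heqzl : ∀ l ∈ Finset.range k,
      (∫ t in Set.Ioc (0:ℝ) θ, Real.exp (-ρ * (t + θ * (l : ℝ))) * α (t + θ * (l : ℝ)) *
        (1 - α (t + θ * (l : ℝ))) * zSens r θ f₀ α w l t) =
      (P l - P (l + 1)) - ∫ t in Set.Ioc (0:ℝ) θ, Real.exp (r * θ) * p (l + 1) t *
        (w (t + θ * (l : ℝ)) * fDen r θ f₀ α l t) := by
    intro l hl
    have hlk : l < k := Finset.mem_range.1 hl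
    have hae : (fun t => Real.exp (-ρ * (t + θ * (l : ℝ))) * α (t + θ * (l : ℝ)) *
        (1 - α (t + θ * (l : ℝ))) * zSens r θ f₀ α w l t) =ᵐ[volume.restrict (Set.Ioc 0 θ)]
        (fun t => (p l t * zSens r θ f₀ α w l t -
          p (l + 1) t * zSens r θ f₀ α w (l + 1) t) -
          Real.exp (r * θ) * p (l + 1) t * (w (t + θ * (l : ℝ)) * fDen r θ f₀ α l t)) := by
      filter_upwards [ae_restrict_mem measurableSet_Ioc, ae_restrict_of_ae (ae_ne θ)]
        with t ht htθ
      rw [hpl l hlk t ⟨ht.1.le, lt_of_le_of_ne ht.2 htθ⟩]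
      simp only [zSens]
      ring
    have hint1 : Integrable (fun t => p l t * zSens r θ f₀ α w l t -
        p (l + 1) t * zSens r θ f₀ α w (l + 1) t) (volume.restrict (Set.Ioc 0 θ)) :=
      (hpz l hlk.le).integrable.sub (hpz (l+1) hlk).integrable
    rw [integral_congr_ae hae, integral_sub hint1 (hpwf l hlk).integrable,
      integral_sub (hpz l hlk.le).integrable (hpz (l+1) hlk).integrable]
  -- assemble
  have hP0 : P 0 = 0 := by
    rw [hPdef]
    simp [zSens]
  rw [Finset.sum_congr rfl heq1, Finset.sum_congr rfl heq2, heq2k, heqzk]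
  rw [Finset.sum_sub_distrib, Finset.sum_add_distrib, Finset.sum_congr rfl heqzl,
    Finset.sum_sub_distrib, Finset.sum_range_sub' P k, hP0]
  ring

end Main

end AVI

/-- variational inequality in the adjoint state, proof of
Proposition 2. If `α*` maximizes the revenue functional, then for every
admissible perturbation direction `w` the adjoint form of the first variation
is nonpositive. -/
theorem adjoint_variational_inequality
    (θ : ℝ) (hθ : 0 < θ) (r ρ : ℝ) (k : ℕ) (T : ℝ)
    (hT₁ : (k : ℝ) * θ ≤ T) (hT₂ : T < ((k : ℝ) + 1) * θ)
    (f₀ : ℝ → ℝ) (hf₀m : Measurable f₀) (hf₀b : ∃ M, ∀ x, |f₀ x| ≤ M)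
    (αs : ℝ → ℝ) (hαs : Admissible αs)
    (hopt : ∀ α : ℝ → ℝ, Admissible α →
      revenue r ρ θ T k f₀ α ≤ revenue r ρ θ T k f₀ αs)
    (p : ℕ → ℝ → ℝ)
    (hpk₁ : ∀ t : ℝ, 0 ≤ t → t < T - θ * (k : ℝ) →
      p k t = Real.exp (-ρ * (t + θ * (k : ℝ))) * αs (t + θ * (k : ℝ)) *
        (1 - αs (t + θ * (k : ℝ))))
    (hpk₂ : ∀ t : ℝ, T - θ * (k : ℝ) ≤ t → t < θ → p k t = 0)
    (hpl : ∀ l < k, ∀ t ∈ Set.Ico (0 : ℝ) θ,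
      p l t = Real.exp (r * θ) * (1 - αs (t + θ * (l : ℝ))) * p (l + 1) t +
        Real.exp (-ρ * (t + θ * (l : ℝ))) * αs (t + θ * (l : ℝ)) *
          (1 - αs (t + θ * (l : ℝ)))) :
    ∀ w : ℝ → ℝ, Measurable w → (∃ M, ∀ x, |w x| ≤ M) →
      (∃ ε₀ > (0 : ℝ), ∀ ε : ℝ, 0 < ε → ε ≤ ε₀ →
        ∀ᵐ t : ℝ, 0 ≤ αs t + ε * w t ∧ αs t + ε * w t ≤ 1) →
      (∑ l ∈ Finset.range k, ∫ t in (0 : ℝ)..θ,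
          w (t + θ * (l : ℝ)) *
            (Real.exp (-ρ * (t + θ * (l : ℝ))) * (1 - 2 * αs (t + θ * (l : ℝ))) -
              Real.exp (r * θ) * p (l + 1) t) * fDen r θ f₀ αs l t) +
        (∫ t in (0 : ℝ)..(T - (k : ℝ) * θ),
          Real.exp (-ρ * (t + θ * (k : ℝ))) * w (t + θ * (k : ℝ)) *
            (1 - 2 * αs (t + θ * (k : ℝ))) * fDen r θ f₀ αs k t)
        ≤ 0 := by
  intro w hwm hwb hpert
  obtain ⟨M, hM⟩ := hf₀b
  obtain ⟨W, hW⟩ := hwb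
  obtain ⟨hαm, hab⟩ := hαs
  obtain ⟨ε₀, hε₀pos, hε₀⟩ := hpert
  have hab1 : ∀ᵐ t : ℝ, |αs t| ≤ 1 := by
    filter_upwards [hab] with t ht; rw [abs_le]; constructor <;> linarith [ht.1, ht.2]
  have hT'0 : 0 ≤ T - (k : ℝ) * θ := by linarith
  have hT'θ : T - (k : ℝ) * θ ≤ θ := by nlinarith [hT₂]
  -- the first variation
  set SD := (∑ l ∈ Finset.range k, ∫ t in Set.Ioc (0:ℝ) θ, AVI.dI r ρ θ f₀ αs w l t) +
      ∫ t in Set.Ioc (0:ℝ) (T - (k : ℝ) * θ), AVI.dI r ρ θ f₀ αs w k t with hSDdef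
  have hSD : SD ≤ 0 := by
    have hexp : ∀ l : ℕ, ∃ C, 0 ≤ C ∧ ∀ ε : ℝ, 0 ≤ ε → ε ≤ 1 →
        |(∫ t in Set.Ioc (0:ℝ) θ, AVI.gI r ρ θ f₀ (fun s => αs s + ε * w s) l t) -
          (∫ t in Set.Ioc (0:ℝ) θ, AVI.gI r ρ θ f₀ αs l t) -
          ε * ∫ t in Set.Ioc (0:ℝ) θ, AVI.dI r ρ θ f₀ αs w l t| ≤ C * ε ^ 2 :=
      fun l => AVI.expansion_term hθ hf₀m hM hαm hab hwm hW l hθ.le le_rfl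
    choose Cf hCf0 hCf using hexp
    obtain ⟨Ck, hCk0, hCk⟩ :=
      AVI.expansion_term hθ hf₀m hM hαm hab hwm hW k hT'0 hT'θ
    set Ct := (∑ l ∈ Finset.range k, Cf l) + Ck with hCtdef
    have hCt0 : 0 ≤ Ct := add_nonneg (Finset.sum_nonneg fun l _ => hCf0 l) hCk0
    have key : ∀ ε : ℝ, 0 < ε → ε ≤ ε₀ → ε ≤ 1 → SD ≤ Ct * ε := by
      intro ε hε0 hεe hε1
      have hadm : Admissible (fun s => αs s + ε * w s) :=
        ⟨hαm.add (hwm.const_mul ε), hε₀ ε hε0 hεe⟩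
      have hrev := hopt _ hadm
      have hsplit : revenue r ρ θ T k f₀ (fun s => αs s + ε * w s) -
          revenue r ρ θ T k f₀ αs - ε * SD =
          (∑ l ∈ Finset.range k,
            ((∫ t in Set.Ioc (0:ℝ) θ, AVI.gI r ρ θ f₀ (fun s => αs s + ε * w s) l t) -
              (∫ t in Set.Ioc (0:ℝ) θ, AVI.gI r ρ θ f₀ αs l t) -
              ε * ∫ t in Set.Ioc (0:ℝ) θ, AVI.dI r ρ θ f₀ αs w l t)) +
          ((∫ t in Set.Ioc (0:ℝ) (T - (k : ℝ) * θ),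
              AVI.gI r ρ θ f₀ (fun s => αs s + ε * w s) k t) -
            (∫ t in Set.Ioc (0:ℝ) (T - (k : ℝ) * θ), AVI.gI r ρ θ f₀ αs k t) -
            ε * ∫ t in Set.Ioc (0:ℝ) (T - (k : ℝ) * θ), AVI.dI r ρ θ f₀ αs w k t) := by
        rw [AVI.revenue_eq hθ.le hT'0, AVI.revenue_eq hθ.le hT'0, hSDdef]
        rw [Finset.sum_sub_distrib, Finset.sum_sub_distrib, ← Finset.mul_sum]
        ring
      have habs : |revenue r ρ θ T k f₀ (fun s => αs s + ε * w s) -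
          revenue r ρ θ T k f₀ αs - ε * SD| ≤ Ct * ε ^ 2 := by
        rw [hsplit, hCtdef, add_mul]
        refine (abs_add_le _ _).trans (add_le_add ?_ (hCk ε hε0.le hε1))
        refine (Finset.abs_sum_le_sum_abs _ _).trans ?_
        rw [Finset.sum_mul]
        exact Finset.sum_le_sum fun l _ => hCf l ε hε0.le hε1
      have h1 : ε * SD ≤ Ct * ε ^ 2 := by
        have h2 := (abs_le.1 habs).1
        linarith [hrev]
      have h3 : ε * SD ≤ ε * (Ct * ε) := by nlinarith [h1]
      exact (mul_le_mul_iff_right₀ hε0).1 h3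
    by_contra hpos
    push_neg at hpos
    set ε := min (min ε₀ 1) (SD / (Ct + 1)) with hεdef
    have hεpos : 0 < ε := lt_min (lt_min hε₀pos one_pos) (div_pos hpos (by linarith))
    have h1 := key ε hεpos ((min_le_left _ _).trans (min_le_left _ _))
      ((min_le_left _ _).trans (min_le_right _ _))
    have h2 : ε ≤ SD / (Ct + 1) := min_le_right _ _
    have h3 : Ct * ε ≤ Ct * (SD / (Ct + 1)) := mul_le_mul_of_nonneg_left h2 hCt0
    have hlt : Ct / (Ct + 1) < 1 := by rw [div_lt_one (by linarith)]; linarith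
    have h4 : Ct * (SD / (Ct + 1)) < SD := by
      calc Ct * (SD / (Ct + 1)) = (Ct / (Ct + 1)) * SD := by ring
        _ < 1 * SD := mul_lt_mul_of_pos_right hlt hpos
        _ = SD := one_mul _
    exact lt_irrefl SD ((h1.trans h3).trans_lt h4)
  -- convert goal to set integrals and use the adjoint identity
  have hgoalsum : (∑ l ∈ Finset.range k, ∫ t in (0 : ℝ)..θ,
      w (t + θ * (l : ℝ)) *
        (Real.exp (-ρ * (t + θ * (l : ℝ))) * (1 - 2 * αs (t + θ * (l : ℝ))) -
          Real.exp (r * θ) * p (l + 1) t) * fDen r θ f₀ αs l t) =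
      ∑ l ∈ Finset.range k, ∫ t in Set.Ioc (0:ℝ) θ,
        w (t + θ * (l : ℝ)) *
          (Real.exp (-ρ * (t + θ * (l : ℝ))) * (1 - 2 * αs (t + θ * (l : ℝ))) -
            Real.exp (r * θ) * p (l + 1) t) * fDen r θ f₀ αs l t :=
    Finset.sum_congr rfl fun l _ => intervalIntegral.integral_of_le hθ.le
  rw [hgoalsum, intervalIntegral.integral_of_le hT'0]
  rw [AVI.adjoint_eq hθ hT'0 hT'θ hf₀m hM hαm hab1 hwm hW p hpk₁ hpk₂ hpl]
  exact hSD
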